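/- Fix 0 < c < e^{-1/2} with smaller root m₁ < 1 of t·e^{-t²/2} = c, and let h₀(r) be such that (h₀(r), h₀(r)+r) is a good pair with respect to c. Then liminf_{r→0} Θ(c, h₀(r), r) ≥ π/√(1 − m₁²), where Θ(c,h₀,r) = ∫₀¹ r/√(−(t·r+h₀)² − 2 log(e^{−h₀²/2} − c·t·r)) dt. -/

import Mathlib

open Real

/-- A pair `(a, b)` is a good pair with respect to `c`. -/
def GoodPair (c a b : ℝ) : Prop :=
  a < b ∧ c * a + Real.exp (-a^2/2) = c * b + Real.exp (-b^2/2) ∧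
    0 < c - a * Real.exp (-a^2/2) ∧ c - b * Real.exp (-b^2/2) ≤ 0

/-- The integral `Θ(c, h₀, r)`. -/
noncomputable def Theta (c h₀ r : ℝ) : ℝ :=
  ∫ t in (0:ℝ)..1,
    r / Real.sqrt (-(t * r + h₀)^2 - 2 * Real.log (Real.exp (-h₀^2/2) - c * t * r))


open Real MeasureTheory intervalIntegral Set

lemma bound_aux {x : ℝ} (hx : 0 < x) (hx1 : x < 1) :
    1 / Real.sqrt (x*(1-x)) ≤ Real.sqrt 2 * (x ^ (-(1:ℝ)/2) + (1-x) ^ (-(1:ℝ)/2)) := by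
  have h1x : (0:ℝ) < 1 - x := by linarith
  have hxr : x ^ (-(1:ℝ)/2) = 1 / Real.sqrt x := by
    rw [show (-(1:ℝ)/2) = -(1/2) by ring, Real.rpow_neg hx.le, Real.sqrt_eq_rpow, one_div]
    norm_num
  have h1xr : (1-x) ^ (-(1:ℝ)/2) = 1 / Real.sqrt (1-x) := by
    rw [show (-(1:ℝ)/2) = -(1/2) by ring, Real.rpow_neg h1x.le, Real.sqrt_eq_rpow, one_div]
    norm_num
  rw [hxr, h1xr]
  have hs2 : (0:ℝ) < Real.sqrt 2 := Real.sqrt_pos.2 (by norm_num)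
  have hsx : 0 < Real.sqrt x := Real.sqrt_pos.2 hx
  have hs1x : 0 < Real.sqrt (1-x) := Real.sqrt_pos.2 h1x
  rcases le_total x (1/2) with h | h
  · have key : Real.sqrt (x/2) ≤ Real.sqrt (x*(1-x)) := by
      apply Real.sqrt_le_sqrt; nlinarith
    have h2 : Real.sqrt (x/2) = Real.sqrt x / Real.sqrt 2 := Real.sqrt_div hx.le 2
    have hpos : 0 < Real.sqrt (x/2) := Real.sqrt_pos.2 (by linarith)
    have : 1 / Real.sqrt (x*(1-x)) ≤ 1 / Real.sqrt (x/2) :=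
      one_div_le_one_div_of_le hpos key
    have h3 : 1 / Real.sqrt (x/2) = Real.sqrt 2 / Real.sqrt x := by
      rw [h2]; field_simp
    have h4 : 0 ≤ Real.sqrt 2 / Real.sqrt (1-x) := by positivity
    calc 1 / Real.sqrt (x*(1-x)) ≤ Real.sqrt 2 / Real.sqrt x := by rw [← h3]; exact this
      _ ≤ Real.sqrt 2 * (1/Real.sqrt x + 1/Real.sqrt (1-x)) := by
          rw [mul_add]; rw [mul_one_div, mul_one_div]; linarith
  · have key : Real.sqrt ((1-x)/2) ≤ Real.sqrt (x*(1-x)) := by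
      apply Real.sqrt_le_sqrt; nlinarith
    have h2 : Real.sqrt ((1-x)/2) = Real.sqrt (1-x) / Real.sqrt 2 := Real.sqrt_div h1x.le 2
    have hpos : 0 < Real.sqrt ((1-x)/2) := Real.sqrt_pos.2 (by linarith)
    have : 1 / Real.sqrt (x*(1-x)) ≤ 1 / Real.sqrt ((1-x)/2) :=
      one_div_le_one_div_of_le hpos key
    have h3 : 1 / Real.sqrt ((1-x)/2) = Real.sqrt 2 / Real.sqrt (1-x) := by
      rw [h2]; field_simp
    have h4 : 0 ≤ Real.sqrt 2 / Real.sqrt x := by positivity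
    calc 1 / Real.sqrt (x*(1-x)) ≤ Real.sqrt 2 / Real.sqrt (1-x) := by rw [← h3]; exact this
      _ ≤ Real.sqrt 2 * (1/Real.sqrt x + 1/Real.sqrt (1-x)) := by
          rw [mul_add]; rw [mul_one_div, mul_one_div]; linarith

lemma II_aux : IntervalIntegrable (fun t : ℝ => 1 / Real.sqrt (t*(1-t))) volume 0 1 := by
  have h1 : IntervalIntegrable (fun t : ℝ => t ^ (-(1:ℝ)/2)) volume 0 1 :=
    intervalIntegral.intervalIntegrable_rpow' (by norm_num)
  have h2 : IntervalIntegrable (fun t : ℝ => (1-t) ^ (-(1:ℝ)/2)) volume 0 1 := by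
    have := h1.comp_sub_left 1
    simpa using this.symm
  have h3 : IntervalIntegrable
      (fun t : ℝ => Real.sqrt 2 * (t ^ (-(1:ℝ)/2) + (1-t) ^ (-(1:ℝ)/2))) volume 0 1 :=
    (h1.add h2).const_mul _
  apply h3.mono_fun
  · apply Measurable.aestronglyMeasurable
    have : Measurable fun t : ℝ => Real.sqrt (t*(1-t)) :=
      Real.continuous_sqrt.measurable.comp (measurable_id.mul (measurable_const.sub measurable_id))
    simpa [one_div] using this
  · rw [Filter.EventuallyLE, ae_restrict_iff' measurableSet_uIoc]
    filter_upwards with x hx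
    rw [Set.uIoc_of_le (by norm_num : (0:ℝ) ≤ 1)] at hx
    rcases eq_or_lt_of_le hx.2 with h | h
    · subst h
      simp only [sub_self, mul_zero, Real.sqrt_zero, div_zero, norm_zero]
      positivity
    · have := bound_aux hx.1 h
      have h0 : 0 ≤ 1 / Real.sqrt (x*(1-x)) := by positivity
      rw [Real.norm_eq_abs, Real.norm_eq_abs, abs_of_nonneg h0, abs_of_nonneg (le_trans h0 this)]
      exact this

lemma val_aux : ∫ t in (0:ℝ)..1, 1 / Real.sqrt (t*(1-t)) = π := by
  have hderiv : ∀ x ∈ Set.Ioo (0:ℝ) 1,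
      HasDerivWithinAt (fun t : ℝ => Real.arcsin (2*t-1)) (1 / Real.sqrt (x*(1-x))) (Set.Ioi x) x := by
    intro x hx
    have h1 : (2*x-1 : ℝ) ≠ -1 := by intro h; have := hx.1; nlinarith
    have h2 : (2*x-1 : ℝ) ≠ 1 := by intro h; have := hx.2; nlinarith
    have inner : HasDerivAt (fun t : ℝ => 2*t-1) 2 x := by
      simpa using ((hasDerivAt_id x).const_mul 2).sub_const 1
    have := (Real.hasDerivAt_arcsin h1 h2).comp x inner
    have heq : 1 / Real.sqrt (1 - (2*x-1)^2) * 2 = 1 / Real.sqrt (x*(1-x)) := by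
      have h4 : (1 - (2*x-1)^2 : ℝ) = 4*(x*(1-x)) := by ring
      rw [h4, Real.sqrt_mul (by norm_num : (0:ℝ) ≤ 4),
        show Real.sqrt 4 = 2 by rw [show (4:ℝ) = 2^2 by norm_num, Real.sqrt_sq (by norm_num)]]
      have hpos : 0 < Real.sqrt (x*(1-x)) :=
        Real.sqrt_pos.2 (by nlinarith [hx.1, hx.2])
      field_simp
    rw [← heq]
    exact this.hasDerivWithinAt
  have := intervalIntegral.integral_eq_sub_of_hasDeriv_right_of_le (by norm_num : (0:ℝ) ≤ 1)
    ((Real.continuous_arcsin.comp (by continuity)).continuousOn) hderiv II_aux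
  rw [this]
  norm_num [Real.arcsin_one, Real.arcsin_neg_one]

set_option maxHeartbeats 1000000 in
lemma F_bounds (c r h : ℝ) (hc : 0 < c) (hr : 0 < r)
    (hrel : Real.exp (-(h+r)^2/2) = Real.exp (-h^2/2) - c*r) :
    ∀ t ∈ Set.Icc (0:ℝ) 1,
      r^2*(1-(c*Real.exp ((h+r)^2/2))^2)*(t*(1-t)) ≤
        -(t*r + h)^2 - 2*Real.log (Real.exp (-h^2/2) - c*t*r) ∧
      -(t*r + h)^2 - 2*Real.log (Real.exp (-h^2/2) - c*t*r) ≤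
        r^2*(1-(c*Real.exp (h^2/2))^2)*(t*(1-t)) := by
  set E := Real.exp (-h^2/2) with hE
  set A := c * Real.exp (h^2/2) with hA
  set B := c * Real.exp ((h+r)^2/2) with hB
  set F : ℝ → ℝ := fun t => -(t*r + h)^2 - 2*Real.log (E - c*t*r) with hF
  have hexp1 : Real.exp (h^2/2) * E = 1 := by
    rw [hE, ← Real.exp_add, show h^2/2 + -h^2/2 = 0 by ring, Real.exp_zero]
  have hexp2 : Real.exp ((h+r)^2/2) * Real.exp (-(h+r)^2/2) = 1 := by
    rw [← Real.exp_add, show (h+r)^2/2 + -(h+r)^2/2 = 0 by ring, Real.exp_zero]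
  have hEcr : 0 < E - c*r := by rw [← hrel]; exact Real.exp_pos _
  have hden : ∀ t ∈ Set.Icc (0:ℝ) 1, 0 < E - c*t*r := by
    intro t ht
    have h9 := mul_nonneg (mul_nonneg hc.le hr.le) (by linarith [ht.2] : (0:ℝ) ≤ 1 - t)
    have : c*t*r ≤ c*r := by nlinarith
    linarith
  have hA0 : 0 < A := by positivity
  have hB0 : 0 < B := by positivity
  have hAE : A * E = c := by rw [hA]; nlinarith
  have hBE : B * (E - c*r) = c := by rw [hB, ← hrel]; nlinarith
  -- derivative facts
  have hFd : ∀ t ∈ Set.Icc (0:ℝ) 1,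
      HasDerivAt F (-2*r*(t*r+h) + 2*c*r/(E - c*t*r)) t := by
    intro t ht
    have hd := hden t ht
    have h1 : HasDerivAt (fun s : ℝ => s*r + h) r t := by
      simpa using ((hasDerivAt_id t).mul_const r).add_const h
    have h2 : HasDerivAt (fun s : ℝ => (s*r + h)^2) (2*(t*r+h)*r) t := by
      simpa using h1.fun_pow 2
    have h3 : HasDerivAt (fun s : ℝ => E - c*s*r) (-(c*r)) t := by
      have h3' : HasDerivAt (fun s : ℝ => c*s*r) (c*r) t := by
        simpa [mul_comm, mul_assoc] using ((hasDerivAt_id t).const_mul c).mul_const r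
      simpa using h3'.const_sub E
    have h4 : HasDerivAt (fun s : ℝ => Real.log (E - c*s*r)) (-(c*r)/(E-c*t*r)) t :=
      h3.log hd.ne'
    have h5 := h2.neg.sub (h4.const_mul 2)
    refine h5.congr_deriv ?_
    ring
  have hFd2 : ∀ t ∈ Set.Icc (0:ℝ) 1,
      HasDerivAt (fun s => -2*r*(s*r+h) + 2*c*r/(E - c*s*r))
        (-2*r^2 + 2*c^2*r^2/(E-c*t*r)^2) t := by
    intro t ht
    have hd := hden t ht
    have h1 : HasDerivAt (fun s : ℝ => s*r + h) r t := by
      simpa using ((hasDerivAt_id t).mul_const r).add_const h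
    have h3 : HasDerivAt (fun s : ℝ => E - c*s*r) (-(c*r)) t := by
      have h3' : HasDerivAt (fun s : ℝ => c*s*r) (c*r) t := by
        simpa [mul_comm, mul_assoc] using ((hasDerivAt_id t).const_mul c).mul_const r
      simpa using h3'.const_sub E
    have h6 : HasDerivAt (fun s : ℝ => (2*c*r)/(E - c*s*r))
        ((0*(E-c*t*r) - 2*c*r*(-(c*r)))/(E-c*t*r)^2) t :=
      (hasDerivAt_const t (2*c*r)).div h3 hd.ne'
    have h7 := (h1.const_mul (-2*r)).add h6
    refine h7.congr_deriv ?_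
    ring
  have hFcont : ContinuousOn F (Set.Icc 0 1) := by
    apply ContinuousOn.sub
    · exact (Continuous.continuousOn (by fun_prop))
    · apply ContinuousOn.mul continuousOn_const
      apply ContinuousOn.log (Continuous.continuousOn (by fun_prop))
      exact fun t ht => (hden t ht).ne'
  -- the generic concavity argument
  have main : ∀ σ μ : ℝ,
      (∀ t ∈ Set.Icc (0:ℝ) 1, σ*(-2*r^2 + 2*c^2*r^2/(E-c*t*r)^2) - 2*μ ≤ 0) →
      ∀ t ∈ Set.Icc (0:ℝ) 1, 0 ≤ σ * F t + μ*(t*(1-t)) := by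
    intro σ μ hcond
    have hq : ∀ t : ℝ, HasDerivAt (fun s : ℝ => μ*(s*(1-s))) (μ*(1-2*t)) t := by
      intro t
      have : HasDerivAt (fun s : ℝ => s*(1-s)) (1*(1-t) + t*(-1)) t :=
        (hasDerivAt_id t).mul ((hasDerivAt_id t).const_sub 1)
      have := this.const_mul μ
      refine this.congr_deriv ?_
      ring
    have hconc : ConcaveOn ℝ (Set.Icc (0:ℝ) 1) (fun t => σ * F t + μ*(t*(1-t))) := by
      apply concaveOn_of_hasDerivWithinAt2_nonpos (convex_Icc 0 1)
        (f' := fun t => σ*(-2*r*(t*r+h) + 2*c*r/(E - c*t*r)) + μ*(1-2*t))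
        (f'' := fun t => σ*(-2*r^2 + 2*c^2*r^2/(E-c*t*r)^2) - 2*μ)
      · exact (hFcont.const_smul σ).add (Continuous.continuousOn (by fun_prop))
      · rw [interior_Icc]
        intro x hx
        exact (((hFd x (Ioo_subset_Icc_self hx)).const_mul σ).add (hq x)).hasDerivWithinAt
      · rw [interior_Icc]
        intro x hx
        have h2q : HasDerivAt (fun s : ℝ => μ*(1-2*s)) (-(2*μ)) x := by
          have : HasDerivAt (fun s : ℝ => 1-2*s) (-2 : ℝ) x := by
            simpa using ((hasDerivAt_id x).const_mul 2).const_sub 1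
          have := this.const_mul μ
          refine this.congr_deriv ?_; ring
        have := ((hFd2 x (Ioo_subset_Icc_self hx)).const_mul σ).add h2q
        have heq : σ * (-2*r^2 + 2*c^2*r^2/(E-c*x*r)^2) + -(2*μ) = σ*(-2*r^2 + 2*c^2*r^2/(E-c*x*r)^2) - 2*μ := by ring
        rw [heq] at this
        exact this.hasDerivWithinAt
      · rw [interior_Icc]
        intro x hx
        exact hcond x (Ioo_subset_Icc_self hx)
    have hF0 : F 0 = 0 := by
      simp only [hF, hE]
      norm_num [Real.log_exp]
      ring
    have hF1 : F 1 = 0 := by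
      simp only [hF]
      rw [show E - c*1*r = Real.exp (-(h+r)^2/2) by rw [hrel]; ring, Real.log_exp]
      ring
    intro t ht
    have hcc := hconc.2
    have := hcc (Set.left_mem_Icc.2 (by norm_num)) (Set.right_mem_Icc.2 (by norm_num))
      (a := 1-t) (b := t) (by linarith [ht.2]) ht.1 (by ring)
    simp only [smul_eq_mul] at this
    norm_num at this
    rw [hF0, hF1] at this
    linarith [this]
  intro t ht
  have hFt : -(t*r + h)^2 - 2*Real.log (E - c*t*r) = F t := rfl
  rw [hFt]
  constructor
  · -- lower bound : take σ = 1, μ = -(r^2*(1-B^2))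
    have hcnd : ∀ s ∈ Set.Icc (0:ℝ) 1,
        (1:ℝ)*(-2*r^2 + 2*c^2*r^2/(E-c*s*r)^2) - 2*(-(r^2*(1-B^2))) ≤ 0 := by
      intro s hs
      have hd := hden s hs
      have hd1 : E - c*r ≤ E - c*s*r := by
        nlinarith [mul_nonneg (mul_nonneg hc.le hr.le) (by linarith [hs.2] : (0:ℝ) ≤ 1-s)]
      have hcB : c ≤ B * (E - c*s*r) := by
        have h9 := mul_nonneg hB0.le (by linarith : (0:ℝ) ≤ (E - c*s*r) - (E - c*r))
        nlinarith [h9]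
      have : 2*c^2*r^2/(E-c*s*r)^2 ≤ 2*r^2*B^2 := by
        rw [div_le_iff₀ (pow_pos hd 2)]
        nlinarith [mul_le_mul hcB hcB hc.le (mul_nonneg hB0.le hd.le), sq_nonneg r]
      linarith
    have := main 1 (-(r^2*(1-B^2))) hcnd t ht
    linarith [this]
  · -- upper bound : σ = -1, μ = r^2*(1-A^2)
    have hcnd : ∀ s ∈ Set.Icc (0:ℝ) 1,
        (-1:ℝ)*(-2*r^2 + 2*c^2*r^2/(E-c*s*r)^2) - 2*(r^2*(1-A^2)) ≤ 0 := by
      intro s hs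
      have hd := hden s hs
      have hd1 : E - c*s*r ≤ E := by
        linarith [mul_nonneg (mul_nonneg hc.le hs.1) hr.le]
      have hcA : A * (E - c*s*r) ≤ c := by
        have h9 := mul_nonneg hA0.le (by linarith : (0:ℝ) ≤ E - (E - c*s*r))
        nlinarith [h9]
      have : 2*r^2*A^2 ≤ 2*c^2*r^2/(E-c*s*r)^2 := by
        rw [le_div_iff₀ (pow_pos hd 2)]
        nlinarith [mul_le_mul hcA hcA (mul_nonneg hA0.le hd.le) hc.le, sq_nonneg r]
      linarith
    have := main (-1) (r^2*(1-A^2)) hcnd t ht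
    linarith [this]

lemma div_sqrt_eq {r u : ℝ} (hr : 0 < r) (hu : 0 < u) (y : ℝ) :
    r / Real.sqrt (r^2*u*(y)) = (1/Real.sqrt u) * (1/Real.sqrt y) := by
  rcases le_or_gt y 0 with hy | hy
  · have h1 : Real.sqrt y = 0 := Real.sqrt_eq_zero'.2 hy
    have h2 : Real.sqrt (r^2*u*y) = 0 := Real.sqrt_eq_zero'.2 (by nlinarith [sq_nonneg r, mul_nonneg (sq_nonneg r) hu.le, mul_nonpos_of_nonneg_of_nonpos (mul_nonneg (sq_nonneg r) hu.le) hy])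
    rw [h1, h2]
    simp
  · rw [Real.sqrt_mul (by positivity), Real.sqrt_mul (by positivity), Real.sqrt_sq hr.le]
    have h1 : 0 < Real.sqrt u := Real.sqrt_pos.2 hu
    have h2 : 0 < Real.sqrt y := Real.sqrt_pos.2 hy
    rw [div_mul_eq_div_div, one_div, one_div, div_div]
    field_simp

lemma theta_bounds (c r h : ℝ) (hc : 0 < c) (hr : 0 < r)
    (hrel : Real.exp (-(h+r)^2/2) = Real.exp (-h^2/2) - c*r)
    (hA1 : c * Real.exp (h^2/2) < 1) (hB1 : c * Real.exp ((h+r)^2/2) < 1) :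
    π / Real.sqrt (1 - (c*Real.exp (h^2/2))^2) ≤ Theta c h r ∧
      Theta c h r ≤ π / Real.sqrt (1 - (c*Real.exp ((h+r)^2/2))^2) := by
  have hFB := F_bounds c r h hc hr hrel
  set A := c * Real.exp (h^2/2) with hA
  set B := c * Real.exp ((h+r)^2/2) with hB
  set F : ℝ → ℝ := fun t => -(t*r + h)^2 - 2*Real.log (Real.exp (-h^2/2) - c*t*r) with hFdef
  have hA0 : 0 < A := by positivity
  have hB0 : 0 < B := by positivity
  have hUA : (0:ℝ) < 1 - A^2 := by nlinarith
  have hUB : (0:ℝ) < 1 - B^2 := by nlinarith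
  have hTheta : Theta c h r = ∫ t in (0:ℝ)..1, r / Real.sqrt (F t) := rfl
  have hFB' : ∀ t ∈ Set.Icc (0:ℝ) 1,
      r^2*(1-B^2)*(t*(1-t)) ≤ F t ∧ F t ≤ r^2*(1-A^2)*(t*(1-t)) := hFB
  have hF0 : F 0 = 0 := by
    have h1 := (hFB' 0 (by norm_num)).1
    have h2 := (hFB' 0 (by norm_num)).2
    norm_num at h1 h2
    linarith
  have hF1 : F 1 = 0 := by
    have h1 := (hFB' 1 (by norm_num)).1
    have h2 := (hFB' 1 (by norm_num)).2
    norm_num at h1 h2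
    linarith
  -- the comparison functions
  have hglo : ∀ t : ℝ, r / Real.sqrt (r^2*(1-A^2)*(t*(1-t)))
      = (1/Real.sqrt (1-A^2)) * (1/Real.sqrt (t*(1-t))) := fun t => div_sqrt_eq hr hUA _
  have hghi : ∀ t : ℝ, r / Real.sqrt (r^2*(1-B^2)*(t*(1-t)))
      = (1/Real.sqrt (1-B^2)) * (1/Real.sqrt (t*(1-t))) := fun t => div_sqrt_eq hr hUB _
  have hgloInt : IntervalIntegrable
      (fun t : ℝ => (1/Real.sqrt (1-A^2)) * (1/Real.sqrt (t*(1-t)))) volume 0 1 :=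
    II_aux.const_mul _
  have hghiInt : IntervalIntegrable
      (fun t : ℝ => (1/Real.sqrt (1-B^2)) * (1/Real.sqrt (t*(1-t)))) volume 0 1 :=
    II_aux.const_mul _
  have hf_nonneg : ∀ t : ℝ, 0 ≤ r / Real.sqrt (F t) :=
    fun t => div_nonneg hr.le (Real.sqrt_nonneg _)
  -- pointwise comparison on Icc
  have hcomp_hi : ∀ t ∈ Set.Icc (0:ℝ) 1,
      r / Real.sqrt (F t) ≤ (1/Real.sqrt (1-B^2)) * (1/Real.sqrt (t*(1-t))) := by
    intro t ht
    rw [← hghi t]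
    rcases eq_or_lt_of_le ht.1 with h0 | h0
    · rw [← h0]
      simp [hF0]
    rcases eq_or_lt_of_le ht.2 with h1 | h1
    · rw [h1]
      simp [hF1]
    have hlow := (hFB' t ht).1
    have hpos : 0 < r^2*(1-B^2)*(t*(1-t)) := by
      have : 0 < t*(1-t) := by nlinarith
      positivity
    exact div_le_div_of_nonneg_left hr.le (Real.sqrt_pos.2 hpos) (Real.sqrt_le_sqrt hlow)
  have hcomp_lo : ∀ t ∈ Set.Icc (0:ℝ) 1,
      (1/Real.sqrt (1-A^2)) * (1/Real.sqrt (t*(1-t))) ≤ r / Real.sqrt (F t) := by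
    intro t ht
    rw [← hglo t]
    rcases eq_or_lt_of_le ht.1 with h0 | h0
    · rw [← h0]
      norm_num
      exact hf_nonneg 0
    rcases eq_or_lt_of_le ht.2 with h1 | h1
    · rw [h1]
      norm_num
      exact hf_nonneg 1
    have hlow := (hFB' t ht).1
    have hup := (hFB' t ht).2
    have hpos : 0 < r^2*(1-B^2)*(t*(1-t)) := by
      have : 0 < t*(1-t) := by nlinarith
      positivity
    have hFpos : 0 < F t := lt_of_lt_of_le hpos hlow
    exact div_le_div_of_nonneg_left hr.le (Real.sqrt_pos.2 hFpos) (Real.sqrt_le_sqrt hup)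
  -- integrability of the integrand
  have hmeas : AEStronglyMeasurable (fun t : ℝ => r / Real.sqrt (F t))
      (volume.restrict (Set.uIoc (0:ℝ) 1)) := by
    apply Measurable.aestronglyMeasurable
    have hFm : Measurable F := by
      apply Measurable.sub
      · fun_prop
      · exact (Real.measurable_log.comp (by fun_prop)).const_mul 2
    simp only [div_eq_mul_inv]
    exact (measurable_const.mul ((Real.continuous_sqrt.measurable.comp hFm).inv))
  have hfInt : IntervalIntegrable (fun t : ℝ => r / Real.sqrt (F t)) volume 0 1 := by
    apply hghiInt.mono_fun hmeas
    rw [Filter.EventuallyLE, ae_restrict_iff' measurableSet_uIoc]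
    filter_upwards with x hx
    rw [Set.uIoc_of_le (by norm_num : (0:ℝ) ≤ 1)] at hx
    have hxI : x ∈ Set.Icc (0:ℝ) 1 := ⟨hx.1.le, hx.2⟩
    have h1 := hcomp_hi x hxI
    have h2 := hf_nonneg x
    rw [Real.norm_eq_abs, Real.norm_eq_abs, abs_of_nonneg h2, abs_of_nonneg (le_trans h2 h1)]
    exact h1
  constructor
  · have hle := intervalIntegral.integral_mono_on (by norm_num : (0:ℝ) ≤ 1) hgloInt hfInt hcomp_lo
    rw [hTheta]
    refine le_trans (le_of_eq ?_) hle
    rw [intervalIntegral.integral_const_mul, val_aux]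
    ring
  · have hle := intervalIntegral.integral_mono_on (by norm_num : (0:ℝ) ≤ 1) hfInt hghiInt hcomp_hi
    rw [hTheta]
    refine le_trans hle (le_of_eq ?_)
    rw [intervalIntegral.integral_const_mul, val_aux]
    ring

theorem stmt12 (c : ℝ) (hc0 : 0 < c) (hc1 : c < Real.exp (-1/2))
    (m₁ : ℝ) (hm₁0 : 0 < m₁) (hm₁1 : m₁ < 1) (hm₁ : m₁ * Real.exp (-m₁^2/2) = c)
    (h₀ : ℝ → ℝ) (ε : ℝ) (hε : 0 < ε)
    (hgp : ∀ r ∈ Set.Ioo (0:ℝ) ε, GoodPair c (h₀ r) (h₀ r + r))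
    (hlim : Filter.Tendsto h₀ (nhdsWithin 0 (Set.Ioi 0)) (nhds m₁)) :
    Real.pi / Real.sqrt (1 - m₁^2) ≤
      Filter.liminf (fun r => Theta c (h₀ r) r) (nhdsWithin 0 (Set.Ioi 0)) := by
  have hm : c * Real.exp (m₁^2/2) = m₁ := by
    have h1 : Real.exp (-m₁^2/2) * Real.exp (m₁^2/2) = 1 := by
      rw [← Real.exp_add, show -m₁^2/2 + m₁^2/2 = 0 by ring, Real.exp_zero]
    calc c * Real.exp (m₁^2/2) = (m₁ * Real.exp (-m₁^2/2)) * Real.exp (m₁^2/2) := by rw [hm₁]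
      _ = m₁ * (Real.exp (-m₁^2/2) * Real.exp (m₁^2/2)) := by ring
      _ = m₁ := by rw [h1, mul_one]
  set l := nhdsWithin (0:ℝ) (Set.Ioi 0) with hldef
  have hconti : ContinuousAt (fun x : ℝ => π / Real.sqrt (1 - x^2)) m₁ := by
    apply ContinuousAt.div continuousAt_const
    · exact (Real.continuous_sqrt.continuousAt).comp (by fun_prop)
    · exact ne_of_gt (Real.sqrt_pos.2 (by nlinarith))
  have hcont2 : ContinuousAt (fun x : ℝ => c * Real.exp (x^2/2)) m₁ := by fun_prop
  have htendA : Filter.Tendsto (fun r => c * Real.exp ((h₀ r)^2/2)) l (nhds m₁) := by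
    have := hcont2.tendsto.comp hlim
    simp only [Function.comp_def] at this
    rw [hm] at this
    exact this
  have htendB : Filter.Tendsto (fun r => c * Real.exp ((h₀ r + r)^2/2)) l (nhds m₁) := by
    have hid : Filter.Tendsto (fun r : ℝ => r) l (nhds 0) :=
      Filter.tendsto_id.mono_right nhdsWithin_le_nhds
    have hsum := hlim.add hid
    rw [add_zero] at hsum
    have := hcont2.tendsto.comp hsum
    simp only [Function.comp_def] at this
    rw [hm] at this
    exact this
  have hTlow : Filter.Tendsto (fun r => π / Real.sqrt (1 - (c * Real.exp ((h₀ r)^2/2))^2)) l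
      (nhds (π / Real.sqrt (1 - m₁^2))) := hconti.tendsto.comp htendA
  have hThigh : Filter.Tendsto (fun r => π / Real.sqrt (1 - (c * Real.exp ((h₀ r + r)^2/2))^2)) l
      (nhds (π / Real.sqrt (1 - m₁^2))) := hconti.tendsto.comp htendB
  have hev : ∀ᶠ r in l, r ∈ Set.Ioo (0:ℝ) ε :=
    Filter.eventually_of_mem (Ioo_mem_nhdsGT hε) (fun x hx => hx)
  have hevA : ∀ᶠ r in l, c * Real.exp ((h₀ r)^2/2) < 1 :=
    htendA.eventually_lt_const hm₁1
  have hevB : ∀ᶠ r in l, c * Real.exp ((h₀ r + r)^2/2) < 1 :=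
    htendB.eventually_lt_const hm₁1
  have hkey : ∀ᶠ r in l, π / Real.sqrt (1 - (c * Real.exp ((h₀ r)^2/2))^2) ≤ Theta c (h₀ r) r ∧
      Theta c (h₀ r) r ≤ π / Real.sqrt (1 - (c * Real.exp ((h₀ r + r)^2/2))^2) := by
    filter_upwards [hev, hevA, hevB] with r h1 h2 h3
    have hg := hgp r h1
    have hrel : Real.exp (-(h₀ r + r)^2/2) = Real.exp (-(h₀ r)^2/2) - c*r := by
      have h4 := hg.2.1
      linarith
    exact theta_bounds c r (h₀ r) hc0 h1.1 hrel h2 h3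
  have hT : Filter.Tendsto (fun r => Theta c (h₀ r) r) l (nhds (π / Real.sqrt (1 - m₁^2))) :=
    tendsto_of_tendsto_of_tendsto_of_le_of_le' hTlow hThigh
      (hkey.mono fun r hr => hr.1) (hkey.mono fun r hr => hr.2)
  rw [hT.liminf_eq]
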